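/- Let C be a completely regular code of covering radius 3 in the hypercube H(n) all of whose codewords have even weight. Then (C, C^{(2)}) is an equitable 2-partition of the halved n-cube, where C^{(2)} is the set of vertices at Hamming distance exactly 2 from C. -/

import Mathlib

open Finset

/-- The hypercube graph on binary words indexed by `ι`. -/
def cube (ι : Type*) [Fintype ι] [DecidableEq ι] : SimpleGraph (ι → ZMod 2) where
  Adj x y := hammingDist x y = 1
  symm := ⟨fun x y (h : hammingDist x y = 1) => (hammingDist_comm y x).trans h⟩
  loopless := ⟨fun x h => by simp [hammingDist_self] at h⟩

instance (ι : Type*) [Fintype ι] [DecidableEq ι] : DecidableRel (cube ι).Adj :=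
  fun x y => inferInstanceAs (Decidable (hammingDist x y = 1))

/-- The halved hypercube: even-weight words, adjacent iff Hamming distance 2. -/
def halvedCube (ι : Type*) [Fintype ι] [DecidableEq ι] :
    SimpleGraph {x : ι → ZMod 2 // Even (hammingDist x 0)} where
  Adj x y := hammingDist x.1 y.1 = 2
  symm := ⟨fun (x y : {x : ι → ZMod 2 // Even (hammingDist x 0)})
    (h : hammingDist x.1 y.1 = 2) => (hammingDist_comm y.1 x.1).trans h⟩
  loopless := ⟨fun x h => by simp [hammingDist_self] at h⟩

instance (ι : Type*) [Fintype ι] [DecidableEq ι] : DecidableRel (halvedCube ι).Adj :=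
  fun x y => inferInstanceAs (Decidable (hammingDist x.1 y.1 = 2))

variable {V : Type*} [Fintype V] [DecidableEq V]

/-- Number of neighbors of `v` in the set `C`. -/
def nbrCount (G : SimpleGraph V) [DecidableRel G.Adj] (v : V) (C : Finset V) : ℕ :=
  (C.filter (G.Adj v)).card

/-- `(C0, C1)` is an equitable 2-partition with quotient matrix `[[a,b],[c,d]]`. -/
def IsEquitable2 (G : SimpleGraph V) [DecidableRel G.Adj] (C0 C1 : Finset V)
    (a b c d : ℕ) : Prop :=
  Disjoint C0 C1 ∧ C0 ∪ C1 = Finset.univ ∧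
  (∀ v ∈ C0, nbrCount G v C0 = a ∧ nbrCount G v C1 = b) ∧
  (∀ v ∈ C1, nbrCount G v C0 = c ∧ nbrCount G v C1 = d)

/-- `C` is an equitable `k`-partition with quotient matrix `S`. -/
def IsEquitableK (G : SimpleGraph V) [DecidableRel G.Adj] {k : ℕ}
    (C : V → Fin k) (S : Fin k → Fin k → ℕ) : Prop :=
  ∀ (v : V) (j : Fin k),
    (Finset.univ.filter (fun w => G.Adj v w ∧ C w = j)).card = S (C v) j



open Finset

namespace Stmt19Aux

variable {n : ℕ}

/-- Flip coordinate `i`. -/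
def flip (v : Fin n → ZMod 2) (i : Fin n) : Fin n → ZMod 2 :=
  Function.update v i (v i + 1)

lemma castDist (x y : Fin n → ZMod 2) :
    ((hammingDist x y : ℕ) : ZMod 2) = ∑ i, x i + ∑ i, y i := by
  have h : ∀ a b : ZMod 2, (if a ≠ b then (1:ZMod 2) else 0) = a + b := by decide
  rw [show hammingDist x y = (univ.filter fun i => x i ≠ y i).card from rfl]
  rw [Finset.card_eq_sum_ones, Nat.cast_sum]
  simp only [Nat.cast_one]
  rw [Finset.sum_filter]
  simp only [h]
  rw [Finset.sum_add_distrib]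

lemma even_iff_cast (m : ℕ) : Even m ↔ ((m : ZMod 2) = 0) := by
  rw [ZMod.natCast_eq_zero_iff]
  exact even_iff_two_dvd

lemma even_dist_iff (x y : Fin n → ZMod 2) :
    Even (hammingDist x y) ↔ (∑ i, x i) = (∑ i, y i) := by
  rw [even_iff_cast, castDist]
  constructor
  · intro h
    have : ∀ a b : ZMod 2, a + b = 0 → a = b := by decide
    exact this _ _ h
  · intro h; rw [h]
    have : ∀ b : ZMod 2, b + b = 0 := by decide
    exact this _

lemma flip_apply_self (v : Fin n → ZMod 2) (i : Fin n) : flip v i i = v i + 1 := by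
  simp [flip]

lemma flip_apply_ne (v : Fin n → ZMod 2) {i k : Fin n} (h : k ≠ i) : flip v i k = v k := by
  simp [flip, Function.update_apply, h]

lemma dist_flip_self (v : Fin n → ZMod 2) (i : Fin n) : hammingDist v (flip v i) = 1 := by
  rw [show hammingDist v (flip v i) = (univ.filter fun k => v k ≠ flip v i k).card from rfl]
  have : (univ.filter fun k => v k ≠ flip v i k) = {i} := by
    ext k
    simp only [mem_filter, mem_univ, true_and, mem_singleton]
    by_cases hk : k = i
    · subst hk
      simp only [flip_apply_self]
      have : ∀ a : ZMod 2, a ≠ a + 1 := by decide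
      simpa using this (v k)
    · simp [flip_apply_ne v hk, hk]
  rw [this, card_singleton]

lemma dist_flip_of_eq {v w : Fin n → ZMod 2} {i : Fin n} (h : v i = w i) :
    hammingDist (flip v i) w = hammingDist v w + 1 := by
  rw [show hammingDist (flip v i) w = (univ.filter fun k => flip v i k ≠ w k).card from rfl,
    show hammingDist v w = (univ.filter fun k => v k ≠ w k).card from rfl]
  have hset : (univ.filter fun k => flip v i k ≠ w k)
      = insert i (univ.filter fun k => v k ≠ w k) := by
    ext k
    simp only [mem_filter, mem_univ, true_and, mem_insert]
    by_cases hk : k = i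
    · subst hk
      simp only [flip_apply_self, true_or, iff_true]
      have : ∀ a : ZMod 2, a + 1 ≠ a := by decide
      rw [← h]; exact this (v k)
    · simp [flip_apply_ne v hk, hk]
  rw [hset, card_insert_of_notMem (by simp [h])]

lemma dist_flip_of_ne {v w : Fin n → ZMod 2} {i : Fin n} (h : v i ≠ w i) :
    hammingDist v w = hammingDist (flip v i) w + 1 := by
  rw [show hammingDist (flip v i) w = (univ.filter fun k => flip v i k ≠ w k).card from rfl,
    show hammingDist v w = (univ.filter fun k => v k ≠ w k).card from rfl]
  have hflip : flip v i i = w i := by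
    have : ∀ a b : ZMod 2, a ≠ b → a + 1 = b := by decide
    rw [flip_apply_self]; exact this _ _ h
  have hset : (univ.filter fun k => v k ≠ w k)
      = insert i (univ.filter fun k => flip v i k ≠ w k) := by
    ext k
    simp only [mem_filter, mem_univ, true_and, mem_insert]
    by_cases hk : k = i
    · subst hk; simp [h]
    · simp [flip_apply_ne v hk, hk]
  rw [hset, card_insert_of_notMem (by simp [hflip])]

lemma eq_flip_of_dist_one {v u : Fin n → ZMod 2} (h : hammingDist v u = 1) :
    ∃ i, u = flip v i := by
  rw [show hammingDist v u = (univ.filter fun k => v k ≠ u k).card from rfl] at h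
  obtain ⟨i, hi⟩ := Finset.card_eq_one.mp h
  refine ⟨i, funext fun k => ?_⟩
  by_cases hk : k = i
  · subst hk
    have hki : v k ≠ u k := by
      have : k ∈ (univ.filter fun k => v k ≠ u k) := by rw [hi]; exact mem_singleton_self k
      simpa using this
    have : ∀ a b : ZMod 2, a ≠ b → b = a + 1 := by decide
    rw [flip_apply_self]; exact this _ _ hki
  · have : k ∉ (univ.filter fun k' => v k' ≠ u k') := by rw [hi]; simpa using hk
    simp only [mem_filter, mem_univ, true_and, not_not] at this
    rw [flip_apply_ne v hk, ← this]

lemma flip_injective (v : Fin n → ZMod 2) : Function.Injective (flip v) := by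
  intro i j hij
  by_contra hne
  have h1 : flip v i i = v i + 1 := flip_apply_self v i
  have h2 : flip v j i = v i := flip_apply_ne v hne
  rw [hij, h2] at h1
  have : ∀ a : ZMod 2, a ≠ a + 1 := by decide
  exact this (v i) h1

lemma card_sphere_filter (v : Fin n → ZMod 2) (p : (Fin n → ZMod 2) → Prop)
    [DecidablePred p] :
    (univ.filter fun u => hammingDist v u = 1 ∧ p u).card
      = (univ.filter fun i : Fin n => p (flip v i)).card := by
  symm
  apply Finset.card_bij (fun i _ => flip v i)
  · intro i hi
    simp only [mem_filter, mem_univ, true_and] at hi ⊢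
    exact ⟨dist_flip_self v i, hi⟩
  · intro i _ j _ h
    exact flip_injective v h
  · intro u hu
    simp only [mem_filter, mem_univ, true_and] at hu
    obtain ⟨i, rfl⟩ := eq_flip_of_dist_one hu.1
    exact ⟨i, by simpa using hu.2, rfl⟩

lemma card_path (v w : Fin n → ZMod 2) :
    (univ.filter fun u => hammingDist v u = 1 ∧ hammingDist u w = 1).card
      = if w = v then n else if hammingDist v w = 2 then 2 else 0 := by
  rw [card_sphere_filter v (fun u => hammingDist u w = 1)]
  by_cases hwv : w = v
  · subst hwv
    rw [if_pos rfl]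
    have : (univ.filter fun i : Fin n => hammingDist (flip w i) w = 1) = univ := by
      apply Finset.filter_true_of_mem
      intro i _
      rw [hammingDist_comm]
      exact dist_flip_self w i
    rw [this, card_univ, Fintype.card_fin]
  · rw [if_neg hwv]
    by_cases h2 : hammingDist v w = 2
    · rw [if_pos h2]
      have hset : (univ.filter fun i : Fin n => hammingDist (flip v i) w = 1)
          = (univ.filter fun i => v i ≠ w i) := by
        ext i
        simp only [mem_filter, mem_univ, true_and]
        by_cases hvi : v i = w i
        · rw [dist_flip_of_eq hvi, h2]
          simp [hvi]
        · have := dist_flip_of_ne hvi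
          rw [h2] at this
          simp [hvi]; omega
      rw [hset, show (univ.filter fun i => v i ≠ w i).card = hammingDist v w from rfl, h2]
    · rw [if_neg h2]
      rw [Finset.card_eq_zero, Finset.filter_eq_empty_iff]
      intro i _
      by_cases hvi : v i = w i
      · rw [dist_flip_of_eq hvi]
        intro hc
        have : hammingDist v w = 0 := by omega
        exact hwv (hammingDist_eq_zero.mp this).symm
      · have := dist_flip_of_ne hvi
        intro hc
        rw [hc] at this
        exact h2 this

lemma keyct (f : (Fin n → ZMod 2) → ℕ) (S : ℕ → ℕ → ℕ)
    (hS : ∀ v : Fin n → ZMod 2, ∀ j ≤ 3,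
      (univ.filter fun w => hammingDist v w = 1 ∧ f w = j).card = S (f v) j)
    (v : Fin n → ZMod 2)
    (hodd : ∀ u : Fin n → ZMod 2, hammingDist v u = 1 → f u = 1 ∨ f u = 3)
    (j : ℕ) (hj : j ≤ 3) :
    2 * (univ.filter fun w => hammingDist v w = 2 ∧ f w = j).card
      + (if f v = j then n else 0)
      = S (f v) 1 * S 1 j + S (f v) 3 * S 3 j := by
  have hA : (∑ u : Fin n → ZMod 2, ∑ w : Fin n → ZMod 2,
      if hammingDist v u = 1 ∧ hammingDist u w = 1 ∧ f w = j then 1 else 0)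
      = S (f v) 1 * S 1 j + S (f v) 3 * S 3 j := by
    have inner : ∀ u : Fin n → ZMod 2,
        (∑ w : Fin n → ZMod 2,
          if hammingDist v u = 1 ∧ hammingDist u w = 1 ∧ f w = j then 1 else 0)
        = if hammingDist v u = 1 then S (f u) j else 0 := by
      intro u
      by_cases h1 : hammingDist v u = 1
      · rw [if_pos h1, ← hS u j hj, Finset.card_filter]
        exact Finset.sum_congr rfl fun w _ => by simp [h1]
      · rw [if_neg h1]
        exact Finset.sum_eq_zero fun w _ => by simp [h1]
    rw [Finset.sum_congr rfl fun u _ => inner u, ← Finset.sum_filter,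
      ← Finset.sum_filter_add_sum_filter_not
        (univ.filter fun u => hammingDist v u = 1) (fun u => f u = 1)]
    have hterm1 : ∀ u ∈ (univ.filter fun u => hammingDist v u = 1).filter
        (fun u => f u = 1), S (f u) j = S 1 j := by
      intro u hu
      simp only [Finset.mem_filter] at hu
      rw [hu.2]
    have hterm3 : ∀ u ∈ (univ.filter fun u => hammingDist v u = 1).filter
        (fun u => ¬ f u = 1), S (f u) j = S 3 j := by
      intro u hu
      simp only [Finset.mem_filter, Finset.mem_univ, true_and] at hu
      rw [(hodd u hu.1).resolve_left hu.2]
    rw [Finset.sum_congr rfl hterm1, Finset.sum_congr rfl hterm3,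
      Finset.sum_const, Finset.sum_const, smul_eq_mul, smul_eq_mul]
    have e1 : (univ.filter fun u => hammingDist v u = 1).filter (fun u => f u = 1)
        = univ.filter fun u => hammingDist v u = 1 ∧ f u = 1 := by
      rw [Finset.filter_filter]
    have e3 : (univ.filter fun u => hammingDist v u = 1).filter (fun u => ¬ f u = 1)
        = univ.filter fun u => hammingDist v u = 1 ∧ f u = 3 := by
      rw [Finset.filter_filter]
      refine Finset.filter_congr fun u _ => ?_
      constructor
      · rintro ⟨h1, h2⟩; exact ⟨h1, (hodd u h1).resolve_left h2⟩
      · rintro ⟨h1, h2⟩; exact ⟨h1, by omega⟩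
    rw [e1, e3, hS v 1 (by omega), hS v 3 (by omega)]
  have hB : (∑ u : Fin n → ZMod 2, ∑ w : Fin n → ZMod 2,
      if hammingDist v u = 1 ∧ hammingDist u w = 1 ∧ f w = j then 1 else 0)
      = 2 * (univ.filter fun w => hammingDist v w = 2 ∧ f w = j).card
        + (if f v = j then n else 0) := by
    rw [Finset.sum_comm]
    have inner : ∀ w : Fin n → ZMod 2,
        (∑ u : Fin n → ZMod 2,
          if hammingDist v u = 1 ∧ hammingDist u w = 1 ∧ f w = j then 1 else 0)
        = if f w = j then (if w = v then n else if hammingDist v w = 2 then 2 else 0)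
          else 0 := by
      intro w
      by_cases hw : f w = j
      · rw [if_pos hw, ← card_path v w, Finset.card_filter]
        exact Finset.sum_congr rfl fun u _ => by simp [hw]
      · rw [if_neg hw]
        exact Finset.sum_eq_zero fun u _ => by simp [hw]
    rw [Finset.sum_congr rfl fun w _ => inner w, ← Finset.sum_filter]
    have split : ∀ w ∈ univ.filter fun w => f w = j,
        (if w = v then n else if hammingDist v w = 2 then 2 else 0)
        = (if hammingDist v w = 2 then 2 else 0) + (if w = v then n else 0) := by
      intro w _
      by_cases hw : w = v
      · subst hw; simp [hammingDist_self]
      · simp [hw]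
    rw [Finset.sum_congr rfl split, Finset.sum_add_distrib]
    congr 1
    · rw [← Finset.sum_filter, Finset.filter_filter, Finset.sum_const, smul_eq_mul,
        mul_comm]
      congr 2
      refine Finset.filter_congr fun w _ => ?_
      exact and_comm
    · rw [Finset.sum_ite_eq' (univ.filter fun w => f w = j) v (fun _ => n)]
      simp only [Finset.mem_filter, Finset.mem_univ, true_and]
  rw [← hB, hA]

end Stmt19Aux


/-- if `C` is a completely regular code of covering radius 3 in
`H(n)` all of whose codewords have even weight, then `(C, C⁽²⁾)` is an
equitable 2-partition of the halved `n`-cube, where `C⁽²⁾` is the set of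
vertices at Hamming distance exactly 2 from `C`. -/
theorem stmt19 (n : ℕ) (C : Finset (Fin n → ZMod 2)) (hC : C.Nonempty)
    (heven : ∀ x ∈ C, Even (hammingDist x 0))
    (hcov3 : ∀ v : Fin n → ZMod 2, C.inf' hC (fun x => hammingDist v x) ≤ 3)
    (hrad3 : ∃ v : Fin n → ZMod 2, C.inf' hC (fun x => hammingDist v x) = 3)
    (hCR : ∃ S : ℕ → ℕ → ℕ, ∀ (v : Fin n → ZMod 2), ∀ j ≤ 3,
      (Finset.univ.filter (fun w => (cube (Fin n)).Adj v w ∧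
          C.inf' hC (fun x => hammingDist w x) = j)).card =
        S (C.inf' hC (fun x => hammingDist v x)) j) :
    ∃ a b c d : ℕ,
      IsEquitable2 (halvedCube (Fin n))
        (Finset.univ.filter (fun v => v.1 ∈ C))
        (Finset.univ.filter (fun v => C.inf' hC (fun x => hammingDist v.1 x) = 2))
        a b c d := by
  classical
  obtain ⟨S, hCRS⟩ := hCR
  -- basic facts about the distance function
  have hfex : ∀ v : Fin n → ZMod 2, ∃ x, x ∈ C ∧
      C.inf' hC (fun x => hammingDist v x) = hammingDist v x :=
    fun v => Finset.exists_mem_eq_inf' hC _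
  have hfle : ∀ (v x : Fin n → ZMod 2), x ∈ C →
      C.inf' hC (fun x => hammingDist v x) ≤ hammingDist v x :=
    fun v x hx => Finset.inf'_le _ hx
  have hf0 : ∀ v : Fin n → ZMod 2,
      C.inf' hC (fun x => hammingDist v x) = 0 ↔ v ∈ C := by
    intro v
    constructor
    · intro h
      obtain ⟨x, hx, he⟩ := hfex v
      rw [h] at he
      rwa [hammingDist_eq_zero.mp he.symm]
    · intro h
      have := hfle v v h
      simpa [hammingDist_self] using this
  have hsum0 : ∀ x ∈ C, (∑ i, x i) = 0 := by
    intro x hx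
    have := (Stmt19Aux.even_dist_iff x 0).mp (heven x hx)
    simpa using this
  have hcast : ∀ v : Fin n → ZMod 2,
      ((C.inf' hC (fun x => hammingDist v x) : ℕ) : ZMod 2) = ∑ i, v i := by
    intro v
    obtain ⟨x, hx, he⟩ := hfex v
    rw [he, Stmt19Aux.castDist, hsum0 x hx, add_zero]
  have hsumv : ∀ v : Fin n → ZMod 2, Even (hammingDist v 0) → (∑ i, v i) = 0 := by
    intro v hv
    have := (Stmt19Aux.even_dist_iff v 0).mp hv
    simpa using this
  have hevenf : ∀ v : Fin n → ZMod 2, Even (hammingDist v 0) →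
      C.inf' hC (fun x => hammingDist v x) = 0 ∨
      C.inf' hC (fun x => hammingDist v x) = 2 := by
    intro v hv
    have h2 : Even (C.inf' hC (fun x => hammingDist v x)) := by
      rw [Stmt19Aux.even_iff_cast, hcast v, hsumv v hv]
    have h3 := hcov3 v
    obtain ⟨k, hk⟩ := h2
    omega
  have hoddf : ∀ v u : Fin n → ZMod 2, Even (hammingDist v 0) →
      hammingDist v u = 1 →
      C.inf' hC (fun x => hammingDist u x) = 1 ∨
      C.inf' hC (fun x => hammingDist u x) = 3 := by
    intro v u hv h1
    have hcd := Stmt19Aux.castDist v u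
    rw [h1, hsumv v hv, zero_add] at hcd
    have hne : ¬ Even (C.inf' hC (fun x => hammingDist u x)) := by
      rw [Stmt19Aux.even_iff_cast, hcast u, ← hcd]
      decide
    have h3 := hcov3 u
    rw [Nat.not_even_iff] at hne
    omega
  have hS' : ∀ v : Fin n → ZMod 2, ∀ j ≤ 3,
      (Finset.univ.filter (fun w => hammingDist v w = 1 ∧
        C.inf' hC (fun x => hammingDist w x) = j)).card =
      S (C.inf' hC (fun x => hammingDist v x)) j := hCRS
  have main : ∀ v : Fin n → ZMod 2, Even (hammingDist v 0) → ∀ j ≤ 3,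
      2 * (Finset.univ.filter (fun w => hammingDist v w = 2 ∧
          C.inf' hC (fun x => hammingDist w x) = j)).card
        + (if C.inf' hC (fun x => hammingDist v x) = j then n else 0)
      = S (C.inf' hC (fun x => hammingDist v x)) 1 * S 1 j
        + S (C.inf' hC (fun x => hammingDist v x)) 3 * S 3 j :=
    fun v hv j hj =>
      Stmt19Aux.keyct (fun w => C.inf' hC (fun x => hammingDist w x)) S hS' v
        (fun u hu => hoddf v u hv hu) j hj
  -- subtype到全空间的计数
  have hsubcount : ∀ (v : {x : Fin n → ZMod 2 // Even (hammingDist x 0)}) (j : ℕ),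
      (Finset.univ.filter (fun w : {x : Fin n → ZMod 2 // Even (hammingDist x 0)} =>
        hammingDist v.1 w.1 = 2 ∧ C.inf' hC (fun x => hammingDist w.1 x) = j)).card
      = (Finset.univ.filter (fun w => hammingDist v.1 w = 2 ∧
          C.inf' hC (fun x => hammingDist w x) = j)).card := by
    intro v j
    apply Finset.card_bij (fun w _ => w.1)
    · intro w hw
      simp only [Finset.mem_filter, Finset.mem_univ, true_and] at hw ⊢
      exact hw
    · intro w _ w' _ h
      exact Subtype.ext h
    · intro w hw
      simp only [Finset.mem_filter, Finset.mem_univ, true_and] at hw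
      have hcd := Stmt19Aux.castDist v.1 w
      rw [hw.1, hsumv v.1 v.2, zero_add] at hcd
      have hσw : (∑ i, w i) = 0 := by
        rw [← hcd]; decide
      have hev : Even (hammingDist w 0) := by
        rw [Stmt19Aux.even_dist_iff]
        simpa using hσw
      exact ⟨⟨w, hev⟩, by simp only [Finset.mem_filter, Finset.mem_univ, true_and]; exact hw, rfl⟩
  have hnbr0 : ∀ v : {x : Fin n → ZMod 2 // Even (hammingDist x 0)},
      nbrCount (halvedCube (Fin n)) v (Finset.univ.filter (fun w => w.1 ∈ C))
      = (Finset.univ.filter (fun w => hammingDist v.1 w = 2 ∧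
          C.inf' hC (fun x => hammingDist w x) = 0)).card := by
    intro v
    rw [← hsubcount v 0]
    unfold nbrCount
    rw [Finset.filter_filter]
    congr 1
    refine Finset.filter_congr fun w _ => ?_
    constructor
    · rintro ⟨hmem, hadj⟩; exact ⟨hadj, (hf0 _).mpr hmem⟩
    · rintro ⟨hadj, h0⟩; exact ⟨(hf0 _).mp h0, hadj⟩
  have hnbr2 : ∀ v : {x : Fin n → ZMod 2 // Even (hammingDist x 0)},
      nbrCount (halvedCube (Fin n)) v
        (Finset.univ.filter (fun w => C.inf' hC (fun x => hammingDist w.1 x) = 2))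
      = (Finset.univ.filter (fun w => hammingDist v.1 w = 2 ∧
          C.inf' hC (fun x => hammingDist w x) = 2)).card := by
    intro v
    rw [← hsubcount v 2]
    unfold nbrCount
    rw [Finset.filter_filter]
    congr 1
    exact Finset.filter_congr fun w _ => and_comm
  -- witnesses
  have hCcopy := hC
  obtain ⟨x0, hx0⟩ := hCcopy
  have hx0e : Even (hammingDist x0 0) := heven x0 hx0
  have hfx0 : C.inf' hC (fun x => hammingDist x0 x) = 0 := (hf0 x0).mpr hx0
  obtain ⟨z, hz⟩ := hrad3
  obtain ⟨y, hy, hzy⟩ := hfex z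
  rw [hz] at hzy
  have hDne : (Finset.univ.filter fun k => z k ≠ y k).Nonempty := by
    rw [← Finset.card_pos,
      show (Finset.univ.filter fun k => z k ≠ y k).card = hammingDist z y from rfl]
    omega
  obtain ⟨i, hi⟩ := hDne
  simp only [Finset.mem_filter, Finset.mem_univ, true_and] at hi
  set u := Stmt19Aux.flip z i with hu
  have hdzu : hammingDist z u = 1 := Stmt19Aux.dist_flip_self z i
  have hduy : hammingDist u y = 2 := by
    have hh := Stmt19Aux.dist_flip_of_ne (w := y) hi
    rw [← hu] at hh
    omega
  have hfu_le : C.inf' hC (fun x => hammingDist u x) ≤ 2 := by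
    have := hfle u y hy
    omega
  have hfu_ge : 2 ≤ C.inf' hC (fun x => hammingDist u x) := by
    obtain ⟨x', hx', he'⟩ := hfex u
    have ht : hammingDist z x' ≤ hammingDist z u + hammingDist u x' :=
      hammingDist_triangle _ _ _
    have h4 := hfle z x' hx'
    omega
  have hfu : C.inf' hC (fun x => hammingDist u x) = 2 := le_antisymm hfu_le hfu_ge
  have hσu : (∑ k, u k) = 0 := by
    rw [← hcast u, hfu]; decide
  have hue : Even (hammingDist u 0) := by
    rw [Stmt19Aux.even_dist_iff]; simpa using hσu
  refine ⟨(Finset.univ.filter (fun w => hammingDist x0 w = 2 ∧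
      C.inf' hC (fun x => hammingDist w x) = 0)).card,
    (Finset.univ.filter (fun w => hammingDist x0 w = 2 ∧
      C.inf' hC (fun x => hammingDist w x) = 2)).card,
    (Finset.univ.filter (fun w => hammingDist u w = 2 ∧
      C.inf' hC (fun x => hammingDist w x) = 0)).card,
    (Finset.univ.filter (fun w => hammingDist u w = 2 ∧
      C.inf' hC (fun x => hammingDist w x) = 2)).card, ?_, ?_, ?_, ?_⟩
  · -- disjoint
    rw [Finset.disjoint_left]
    intro w hw hw2
    simp only [Finset.mem_filter, Finset.mem_univ, true_and] at hw hw2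
    have := (hf0 w.1).mpr hw
    omega
  · -- union
    apply Finset.eq_univ_iff_forall.mpr
    intro w
    simp only [Finset.mem_union, Finset.mem_filter, Finset.mem_univ, true_and]
    rcases hevenf w.1 w.2 with h | h
    · exact Or.inl ((hf0 w.1).mp h)
    · exact Or.inr h
  · -- cell C0
    intro v hv
    simp only [Finset.mem_filter, Finset.mem_univ, true_and] at hv
    have hv0 : C.inf' hC (fun x => hammingDist v.1 x) = 0 := (hf0 v.1).mpr hv
    constructor
    · rw [hnbr0 v]
      have k1 := main v.1 v.2 0 (by omega)
      have k2 := main x0 hx0e 0 (by omega)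
      rw [hv0] at k1
      rw [hfx0] at k2
      simp only [if_pos rfl] at k1 k2
      omega
    · rw [hnbr2 v]
      have k1 := main v.1 v.2 2 (by omega)
      have k2 := main x0 hx0e 2 (by omega)
      rw [hv0] at k1
      rw [hfx0] at k2
      norm_num at k1 k2
      omega
  · -- cell C1
    intro v hv
    simp only [Finset.mem_filter, Finset.mem_univ, true_and] at hv
    constructor
    · rw [hnbr0 v]
      have k1 := main v.1 v.2 0 (by omega)
      have k2 := main u hue 0 (by omega)
      rw [hv] at k1
      rw [hfu] at k2
      norm_num at k1 k2
      omega
    · rw [hnbr2 v]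
      have k1 := main v.1 v.2 2 (by omega)
      have k2 := main u hue 2 (by omega)
      rw [hv] at k1
      rw [hfu] at k2
      simp only [if_pos rfl] at k1 k2
      omega
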